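/- The second kind Apostol type Euler polynomials of order -k satisfy E_n^{*(-k)}(x;λ) = (k! 2^{n-k} / λ^k) · y_3(n,k;λ²; (x+k)/(2k), (x-k)/(2k)), i.e., E_n^{*(-k)}(x;λ) = 2^{-k} Σ_{j=0}^{k} C(k,j) λ^{2j-k} (x - k + 2j)^n. -/

import Mathlib

noncomputable def y3 (n k : ℕ) (lam a b : ℂ) : ℂ :=
  (k.factorial : ℂ)⁻¹ * ∑ j ∈ Finset.range (k + 1),
    (k.choose j : ℂ) * lam ^ j * (b * k + j * (a - b)) ^ n

lemma egf_unique (a b : ℕ → ℂ) (f : ℂ → ℂ)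
    (ha : ∀ t : ℂ, HasSum (fun n => a n * t ^ n) (f t))
    (hb : ∀ t : ℂ, HasSum (fun n => b n * t ^ n) (f t)) : a = b := by
  have key : ∀ (c : ℕ → ℂ), (∀ t : ℂ, HasSum (fun n => c n * t ^ n) (f t)) →
      HasFPowerSeriesAt f (FormalMultilinearSeries.ofScalars ℂ c) 0 := by
    intro c hc
    refine ⟨1, ?_, one_pos, ?_⟩
    · have hsum : Summable fun n => ‖FormalMultilinearSeries.ofScalars ℂ c n‖ * (1 : ℝ) ^ n := by
        simp only [FormalMultilinearSeries.ofScalars_norm, one_pow, mul_one]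
        have := (hc 1).summable
        simp only [one_pow, mul_one] at this
        exact summable_norm_iff.mpr this
      have h2 := FormalMultilinearSeries.le_radius_of_summable (r := 1)
        (FormalMultilinearSeries.ofScalars ℂ c) (by exact_mod_cast hsum)
      simpa using h2
    · intro y _
      have heq : (fun n => (FormalMultilinearSeries.ofScalars ℂ c n) fun _ => y)
          = fun n => c n * y ^ n := by
        funext n
        rw [FormalMultilinearSeries.ofScalars_apply_eq, smul_eq_mul]
      rw [zero_add, heq]
      exact hc y
  have h := (key a ha).eq_formalMultilinearSeries (key b hb)
  exact (FormalMultilinearSeries.ofScalars_series_eq_iff ℂ a b).mp h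

theorem stmt14 (k : ℕ) (hk : 0 < k) (lam x : ℂ) (hlam : lam ≠ 0) (E : ℕ → ℂ)
    (hE : ∀ t : ℂ, HasSum (fun n => E n * t ^ n / n.factorial)
      (((lam * Complex.exp t + lam⁻¹ * Complex.exp (-t)) / 2) ^ k *
        Complex.exp (t * x))) :
    ∀ n : ℕ,
      E n = (k.factorial : ℂ) * 2 ^ n / (2 ^ k * lam ^ k) *
        y3 n k (lam ^ 2) ((x + k) / (2 * k)) ((x - k) / (2 * k)) ∧
      E n = ((2 : ℂ) ^ k)⁻¹ * ∑ j ∈ Finset.range (k + 1),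
        (k.choose j : ℂ) * lam ^ (2 * (j : ℤ) - k) * (x - k + 2 * j) ^ n := by
  -- notation
  set f : ℂ → ℂ := fun t =>
    ((lam * Complex.exp t + lam⁻¹ * Complex.exp (-t)) / 2) ^ k * Complex.exp (t * x) with hf
  set c : ℕ → ℂ := fun n => ((2 : ℂ) ^ k)⁻¹ * ∑ j ∈ Finset.range (k + 1),
    (k.choose j : ℂ) * lam ^ (2 * (j : ℤ) - k) * (x - k + 2 * j) ^ n with hcdef
  have hzpow : ∀ j : ℕ, j ≤ k →
      lam ^ (2 * (j : ℤ) - k) = (lam ^ 2) ^ j * (lam ^ k)⁻¹ := by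
    intro j hj
    rw [zpow_sub₀ hlam, zpow_natCast]
    congr 1
    rw [show (2 * (j : ℤ)) = ((2 * j : ℕ) : ℤ) by push_cast; ring, zpow_natCast, pow_mul]
  -- the generating function identity
  have hident : ∀ t : ℂ, f t = ∑ j ∈ Finset.range (k + 1),
      ((2 : ℂ) ^ k)⁻¹ * (k.choose j : ℂ) * lam ^ (2 * (j : ℤ) - k) *
        Complex.exp (t * (x - k + 2 * j)) := by
    intro t
    rw [hf]
    simp only [div_pow, add_pow, Finset.sum_div, Finset.sum_mul]
    refine Finset.sum_congr rfl fun j hj => ?_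
    have hjk : j ≤ k := Nat.lt_succ_iff.mp (Finset.mem_range.mp hj)
    rw [hzpow j hjk]
    have hcast : ((k - j : ℕ) : ℂ) = (k : ℂ) - j := Nat.cast_sub hjk
    have hexp : Complex.exp t ^ j * Complex.exp (-t) ^ (k - j) * Complex.exp (t * x)
        = Complex.exp (t * (x - k + 2 * j)) := by
      rw [← Complex.exp_nat_mul, ← Complex.exp_nat_mul, ← Complex.exp_add, ← Complex.exp_add]
      congr 1
      rw [hcast]; ring
    have hlampow : lam ^ j * (lam⁻¹) ^ (k - j) = (lam ^ 2) ^ j * (lam ^ k)⁻¹ := by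
      rw [inv_pow]
      have h1 : lam ^ k = lam ^ (k - j) * lam ^ j := by rw [← pow_add]; congr 1; omega
      have h2 : (lam ^ 2) ^ j = lam ^ j * lam ^ j := by rw [← pow_mul, two_mul, pow_add]
      rw [h1, h2, mul_inv]
      field_simp
    calc (lam * Complex.exp t) ^ j * (lam⁻¹ * Complex.exp (-t)) ^ (k - j) *
          (k.choose j : ℂ) / 2 ^ k * Complex.exp (t * x)
        = (lam ^ j * (lam⁻¹) ^ (k - j)) * (k.choose j : ℂ) / 2 ^ k *
            (Complex.exp t ^ j * Complex.exp (-t) ^ (k - j) * Complex.exp (t * x)) := by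
          rw [mul_pow, mul_pow]; ring
      _ = _ := by rw [hexp, hlampow]; ring
  -- HasSum for the explicit coefficients
  have hb : ∀ t : ℂ, HasSum (fun n => c n / n.factorial * t ^ n) (f t) := by
    intro t
    have hterm : ∀ j ∈ Finset.range (k + 1),
        HasSum (fun n => ((2 : ℂ) ^ k)⁻¹ * (k.choose j : ℂ) * lam ^ (2 * (j : ℤ) - k) *
            ((x - k + 2 * j) ^ n * t ^ n / n.factorial))
          (((2 : ℂ) ^ k)⁻¹ * (k.choose j : ℂ) * lam ^ (2 * (j : ℤ) - k) *
            Complex.exp (t * (x - k + 2 * j))) := by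
      intro j _
      have he : HasSum (fun n => (t * (x - k + 2 * j)) ^ n / n.factorial)
          (Complex.exp (t * (x - k + 2 * j))) := by
        rw [Complex.exp_eq_exp_ℂ]
        exact NormedSpace.expSeries_div_hasSum_exp _
      have := he.mul_left (((2 : ℂ) ^ k)⁻¹ * (k.choose j : ℂ) * lam ^ (2 * (j : ℤ) - k))
      convert this using 2 with n
      · rfl
      rw [mul_pow]; ring
    have htot := hasSum_sum hterm
    rw [← hident t] at htot
    convert htot using 1
    funext n
    rw [hcdef]
    simp only [Finset.sum_mul, Finset.sum_div, Finset.mul_sum]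
    refine Finset.sum_congr rfl fun j _ => ?_
    ring
  -- uniqueness of EGF coefficients
  have ha : ∀ t : ℂ, HasSum (fun n => E n / n.factorial * t ^ n) (f t) := by
    intro t
    have : (fun n : ℕ => E n / n.factorial * t ^ n)
        = fun n : ℕ => E n * t ^ n / n.factorial := by funext n; ring
    rw [this]
    exact hE t
  have hEc : ∀ n, E n = c n := by
    intro n
    have h := egf_unique _ _ f ha hb
    have h2 := congrFun h n
    have hfac : ((n.factorial : ℂ)) ≠ 0 := Nat.cast_ne_zero.mpr n.factorial_ne_zero
    field_simp at h2
    exact h2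
  intro n
  have hk0 : ((k : ℂ)) ≠ 0 := Nat.cast_ne_zero.mpr hk.ne'
  have hfack : ((k.factorial : ℂ)) ≠ 0 := Nat.cast_ne_zero.mpr k.factorial_ne_zero
  constructor
  · rw [hEc n, hcdef]
    simp only
    unfold y3
    have harg : ∀ j : ℕ, (x - (k : ℂ)) / (2 * k) * k
        + (j : ℂ) * ((x + k) / (2 * k) - (x - k) / (2 * k)) = (x - k + 2 * j) / 2 := by
      intro j; field_simp; ring
    have hsum1 : ∑ j ∈ Finset.range (k + 1),
        (k.choose j : ℂ) * lam ^ (2 * (j : ℤ) - k) * (x - k + 2 * j) ^ n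
        = (lam ^ k)⁻¹ * ∑ j ∈ Finset.range (k + 1),
            (k.choose j : ℂ) * (lam ^ 2) ^ j * (x - k + 2 * j) ^ n := by
      rw [Finset.mul_sum]
      refine Finset.sum_congr rfl fun j hj => ?_
      rw [hzpow j (Nat.lt_succ_iff.mp (Finset.mem_range.mp hj))]
      ring
    have hsum2 : ∑ j ∈ Finset.range (k + 1), (k.choose j : ℂ) * (lam ^ 2) ^ j *
          ((x - (k : ℂ)) / (2 * k) * k
            + (j : ℂ) * ((x + k) / (2 * k) - (x - k) / (2 * k))) ^ n
        = ((2 : ℂ) ^ n)⁻¹ * ∑ j ∈ Finset.range (k + 1),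
            (k.choose j : ℂ) * (lam ^ 2) ^ j * (x - k + 2 * j) ^ n := by
      rw [Finset.mul_sum]
      refine Finset.sum_congr rfl fun j _ => ?_
      rw [harg j, div_pow]
      ring
    rw [hsum1, hsum2]
    field_simp
  · rw [hEc n]
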